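/- Let d ≥ 3 be an integer, H_1,…,H_d ∈ (0,1), K_1,…,K_d ∈ (0,1] with 2H_jK_j > 1 for each j, θ ∈ ℝ and x ∈ ℝ^d. Then there exists a constant C > 0 (depending only on d, the H_j, K_j and θ) such that for every s > 0 and every z ∈ ℝ^d with z ≠ x, the partial derivative of Ū with respect to the time variable satisfies |∂_s Ū(s,z)| ≤ C s^{−d/2 + θ} |w(s,z)|^{2−d}, where w(s,z) ∈ ℝ^d has components w_j(s,z) = (z_j − x_j) s^{−H_jK_j}. -/

import Mathlib

open scoped Real

/-- Twice the kernel of the `d`-dimensional Newtonian potential (`d ≥ 3`):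
`U(v) = -(Γ(d/2 - 1)/(2π^{d/2})) |v|^{2-d}`. -/
noncomputable def newtonU (d : ℕ) (v : EuclideanSpace ℝ (Fin d)) : ℝ :=
  -(Real.Gamma ((d : ℝ)/2 - 1) / (2 * Real.pi ^ ((d : ℝ)/2))) * ‖v‖ ^ ((2:ℝ) - d)

/-- `Ū(s,z) = (Π_j 2H_jK_j)^{-1/2} s^θ U(v(s,z))` where
`v_j(s,z) = (z_j - x_j) s^{1/2 - H_jK_j} / √(2H_jK_j)`. -/
noncomputable def Ubar (d : ℕ) (H K : Fin d → ℝ) (θ : ℝ) (x : EuclideanSpace ℝ (Fin d))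
    (s : ℝ) (z : EuclideanSpace ℝ (Fin d)) : ℝ :=
  (∏ j, 2 * H j * K j) ^ (-(1:ℝ)/2) * s ^ θ *
    newtonU d ((WithLp.equiv 2 (Fin d → ℝ)).symm
      (fun j => (z j - x j) * s ^ ((1:ℝ)/2 - H j * K j) / Real.sqrt (2 * H j * K j)))

/-- For `d ≥ 3`, `H_j ∈ (0,1)`, `K_j ∈ (0,1]` with `2H_jK_j > 1`, `θ ∈ ℝ`, `x ∈ ℝ^d`,
there is `C > 0` such that for all `s > 0` and `z ≠ x`,
`|∂_s Ū(s,z)| ≤ C s^{-d/2 + θ} |w(s,z)|^{2-d}` where `w_j(s,z) = (z_j - x_j) s^{-H_jK_j}`. -/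
theorem Ubar_time_deriv_bound (d : ℕ) (hd : 3 ≤ d) (H K : Fin d → ℝ)
    (hH : ∀ j, H j ∈ Set.Ioo (0:ℝ) 1) (hK : ∀ j, K j ∈ Set.Ioc (0:ℝ) 1)
    (hHK : ∀ j, 1 < 2 * H j * K j) (θ : ℝ) (x : EuclideanSpace ℝ (Fin d)) :
    ∃ C : ℝ, 0 < C ∧ ∀ s : ℝ, 0 < s → ∀ z : EuclideanSpace ℝ (Fin d), z ≠ x →
      |deriv (fun u : ℝ => Ubar d H K θ x u z) s| ≤
        C * s ^ (-(d : ℝ)/2 + θ) *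
          ‖(WithLp.equiv 2 (Fin d → ℝ)).symm
              (fun j => (z j - x j) * s ^ (-(H j * K j)))‖ ^ ((2:ℝ) - d) := by
  have hd3 : (3:ℝ) ≤ (d:ℝ) := by exact_mod_cast hd
  set c0 : ℝ := (∏ j, 2 * H j * K j) ^ (-(1:ℝ)/2) with hc0
  set c1 : ℝ := Real.Gamma ((d : ℝ)/2 - 1) / (2 * Real.pi ^ ((d : ℝ)/2)) with hc1
  set e : ℝ := ((2:ℝ) - d)/2 with he
  have he_neg : e < 0 := by rw [he]; linarith
  have hhk : ∀ j, 0 < 2 * H j * K j := fun j => lt_trans one_pos (hHK j)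
  have hc0pos : 0 < c0 :=
    Real.rpow_pos_of_pos (Finset.prod_pos fun j _ => hhk j) _
  have hc1pos : 0 < c1 := by
    apply div_pos (Real.Gamma_pos_of_pos (by linarith))
    have := Real.pi_pos
    positivity
  have habs : 0 < |θ| + |e| :=
    add_pos_of_nonneg_of_pos (abs_nonneg θ) (abs_pos.mpr he_neg.ne)
  refine ⟨c0 * c1 * (|θ| + |e|) * 2 ^ (-e), by positivity, ?_⟩
  intro s hs z hz
  set a : Fin d → ℝ := fun j => (z j - x j)^2 / (2 * H j * K j) with ha
  set p : Fin d → ℝ := fun j => 1 - 2 * H j * K j with hp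
  set Q : ℝ → ℝ := fun u => ∑ j, a j * u ^ (p j) with hQ
  set W : ℝ := ∑ j, (z j - x j)^2 * s ^ (-(2 * (H j * K j))) with hW
  have ha_nonneg : ∀ j, 0 ≤ a j := fun j => div_nonneg (sq_nonneg _) (hhk j).le
  have hzx : ∃ j, z j - x j ≠ 0 := by
    by_contra h
    push_neg at h
    exact hz (PiLp.ext fun j => by have := h j; linarith)
  have hWpos : 0 < W := by
    obtain ⟨j0, hj0⟩ := hzx
    refine Finset.sum_pos' (fun j _ => by positivity) ⟨j0, Finset.mem_univ j0, ?_⟩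
    have : 0 < (z j0 - x j0)^2 := by positivity
    positivity
  have hQW : s/2 * W ≤ Q s := by
    rw [hQ, hW, Finset.mul_sum]
    refine Finset.sum_le_sum fun j _ => ?_
    have h1 : s ^ (p j) = s * s ^ (-(2 * (H j * K j))) := by
      nth_rewrite 2 [← Real.rpow_one s]
      rw [← Real.rpow_add hs]
      congr 1
      show p j = 1 + -(2 * (H j * K j))
      rw [hp]; ring
    rw [ha, h1]
    have h2 : 2 * H j * K j ≤ 2 := by
      have := (hH j).2; have := (hK j).2; have := (hH j).1; have := (hK j).1
      nlinarith
    have ht : (0:ℝ) ≤ s ^ (-(2 * (H j * K j))) := Real.rpow_nonneg hs.le _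
    have h3 : (1:ℝ)/2 ≤ 1/(2 * H j * K j) := by
      rw [div_le_div_iff₀ two_pos (hhk j)]; linarith
    calc s/2 * ((z j - x j)^2 * s ^ (-(2 * (H j * K j))))
        = ((z j - x j)^2 * s * s ^ (-(2 * (H j * K j)))) * (1/2) := by ring
      _ ≤ ((z j - x j)^2 * s * s ^ (-(2 * (H j * K j)))) * (1/(2 * H j * K j)) := by
          apply mul_le_mul_of_nonneg_left h3; positivity
      _ = (z j - x j)^2 / (2 * H j * K j) * (s * s ^ (-(2 * (H j * K j)))) := by ring
  have hQs : 0 < Q s := lt_of_lt_of_le (by positivity) hQW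
  -- pointwise formula for Ubar on Ioi 0
  have hUeq : ∀ u ∈ Set.Ioi (0:ℝ), Ubar d H K θ x u z = -(c0*c1) * (u^θ * Q u ^ e) := by
    intro u hu
    have hu : (0:ℝ) < u := hu
    have hQu_nonneg : 0 ≤ Q u :=
      Finset.sum_nonneg fun j _ => mul_nonneg (ha_nonneg j) (Real.rpow_nonneg hu.le _)
    have hnorm : ‖(WithLp.equiv 2 (Fin d → ℝ)).symm
        (fun j => (z j - x j) * u ^ ((1:ℝ)/2 - H j * K j) / Real.sqrt (2 * H j * K j))‖
        = Real.sqrt (Q u) := by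
      rw [EuclideanSpace.norm_eq]
      congr 1
      refine Finset.sum_congr rfl fun j _ => ?_
      have : ((WithLp.equiv 2 (Fin d → ℝ)).symm
          (fun j => (z j - x j) * u ^ ((1:ℝ)/2 - H j * K j) / Real.sqrt (2 * H j * K j))) j
          = (z j - x j) * u ^ ((1:ℝ)/2 - H j * K j) / Real.sqrt (2 * H j * K j) := rfl
      rw [this, Real.norm_eq_abs, sq_abs, div_pow, mul_pow, Real.sq_sqrt (hhk j).le]
      have h1 : (u ^ ((1:ℝ)/2 - H j * K j))^2 = u ^ (p j) := by
        rw [← Real.rpow_natCast (u ^ _), ← Real.rpow_mul hu.le]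
        congr 1; rw [hp]; push_cast; ring
      rw [h1, ha]; ring
    rw [Ubar, newtonU, hnorm, Real.sqrt_eq_rpow, ← Real.rpow_mul hQu_nonneg]
    have : (1:ℝ)/2 * ((2:ℝ) - d) = e := by rw [he]; ring
    rw [this, ← hc0, ← hc1]; ring
  -- derivative
  set Q' : ℝ := ∑ j, a j * (p j * s ^ (p j - 1)) with hQ'
  have hQd : HasDerivAt Q Q' s := by
    rw [hQ, hQ']
    exact HasDerivAt.fun_sum fun j _ =>
      (Real.hasDerivAt_rpow_const (Or.inl hs.ne')).const_mul (a j)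
  set g' : ℝ := θ * s^(θ-1) * Q s ^ e + s^θ * (Q' * e * Q s ^ (e-1)) with hg'
  have hg : HasDerivAt (fun u : ℝ => u^θ * Q u ^ e) g' s :=
    (Real.hasDerivAt_rpow_const (Or.inl hs.ne')).mul (hQd.rpow_const (Or.inl hQs.ne'))
  have hEv : (fun u : ℝ => Ubar d H K θ x u z) =ᶠ[nhds s]
      (fun u : ℝ => -(c0*c1) * (u^θ * Q u ^ e)) := by
    filter_upwards [Ioi_mem_nhds hs] with u hu using hUeq u hu
  have hderiv : deriv (fun u : ℝ => Ubar d H K θ x u z) s = -(c0*c1) * g' := by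
    rw [hEv.deriv_eq, (hg.const_mul (-(c0*c1))).deriv]
  -- bound on Q'
  have hQ'bound : |Q'| ≤ Q s / s := by
    rw [hQ', hQ, Finset.sum_div]
    refine le_trans (Finset.abs_sum_le_sum_abs _ _) (Finset.sum_le_sum fun j _ => ?_)
    have hsp : (0:ℝ) ≤ s ^ (p j - 1) := Real.rpow_nonneg hs.le _
    have hpj : |p j| ≤ 1 := by
      rw [show p j = 1 - 2 * H j * K j from rfl, abs_le]
      constructor
      · have h2 : 2 * H j * K j ≤ 2 := by
          have := (hH j).2; have := (hK j).2; have := (hH j).1; have := (hK j).1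
          nlinarith
        linarith
      · linarith [hHK j]
    have h1 : s ^ (p j - 1) = s ^ (p j) / s := by
      rw [Real.rpow_sub hs, Real.rpow_one]
    calc |a j * (p j * s ^ (p j - 1))| = a j * |p j| * s ^ (p j - 1) := by
          rw [abs_mul, abs_mul, abs_of_nonneg (ha_nonneg j), abs_of_nonneg hsp]; ring
      _ ≤ a j * 1 * s ^ (p j - 1) := by
          apply mul_le_mul_of_nonneg_right _ hsp
          exact mul_le_mul_of_nonneg_left hpj (ha_nonneg j)
      _ = a j * s ^ (p j) / s := by rw [h1]; ring
  have hg'bound : |g'| ≤ (|θ| + |e|) * (s^(θ-1) * Q s ^ e) := by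
    rw [hg']
    have hQse : (0:ℝ) ≤ Q s ^ e := Real.rpow_nonneg hQs.le _
    have hQse1 : (0:ℝ) ≤ Q s ^ (e-1) := Real.rpow_nonneg hQs.le _
    have hst : (0:ℝ) ≤ s ^ θ := Real.rpow_nonneg hs.le _
    have hst1 : (0:ℝ) ≤ s ^ (θ-1) := Real.rpow_nonneg hs.le _
    refine le_trans (abs_add_le _ _) ?_
    have h1 : |θ * s^(θ-1) * Q s ^ e| = |θ| * (s^(θ-1) * Q s ^ e) := by
      rw [abs_mul, abs_mul, abs_of_nonneg hst1, abs_of_nonneg hQse]; ring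
    have h2 : |s^θ * (Q' * e * Q s ^ (e-1))| = s^θ * |Q'| * |e| * Q s ^ (e-1) := by
      rw [abs_mul, abs_mul, abs_mul, abs_of_nonneg hst, abs_of_nonneg hQse1]; ring
    have h3 : s^θ * |Q'| * |e| * Q s ^ (e-1) ≤ s^θ * (Q s / s) * |e| * Q s ^ (e-1) := by
      have : s^θ * |Q'| ≤ s^θ * (Q s / s) := mul_le_mul_of_nonneg_left hQ'bound hst
      apply mul_le_mul_of_nonneg_right _ hQse1
      exact mul_le_mul_of_nonneg_right this (abs_nonneg e)
    have h4 : s^θ * (Q s / s) * |e| * Q s ^ (e-1) = |e| * (s^(θ-1) * Q s ^ e) := by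
      rw [Real.rpow_sub hs, Real.rpow_one, show Q s ^ e = Q s ^ (e-1+1) by norm_num,
        Real.rpow_add hQs, Real.rpow_one]
      field_simp
    rw [h1, h2]
    calc |θ| * (s^(θ-1) * Q s ^ e) + s^θ * |Q'| * |e| * Q s ^ (e-1)
        ≤ |θ| * (s^(θ-1) * Q s ^ e) + |e| * (s^(θ-1) * Q s ^ e) := by
          rw [← h4]; linarith
      _ = (|θ| + |e|) * (s^(θ-1) * Q s ^ e) := by ring
  -- norm of w
  have hwnorm : ‖(WithLp.equiv 2 (Fin d → ℝ)).symm
      (fun j => (z j - x j) * s ^ (-(H j * K j)))‖ = Real.sqrt W := by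
    rw [EuclideanSpace.norm_eq]
    congr 1
    rw [hW]
    refine Finset.sum_congr rfl fun j _ => ?_
    have : ((WithLp.equiv 2 (Fin d → ℝ)).symm
        (fun j => (z j - x j) * s ^ (-(H j * K j)))) j
        = (z j - x j) * s ^ (-(H j * K j)) := rfl
    rw [this, Real.norm_eq_abs, sq_abs, mul_pow]
    congr 1
    rw [← Real.rpow_natCast (s ^ _), ← Real.rpow_mul hs.le]
    congr 1; push_cast; ring
  have hwpow : Real.sqrt W ^ ((2:ℝ) - d) = W ^ e := by
    rw [Real.sqrt_eq_rpow, ← Real.rpow_mul hWpos.le]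
    congr 1; rw [he]; ring
  -- Q s ^ e bound
  have hQe_bound : Q s ^ e ≤ 2 ^ (-e) * (s ^ e * W ^ e) := by
    have h2 : Q s ^ e ≤ (s/2 * W) ^ e :=
      Real.rpow_le_rpow_of_nonpos (by positivity) hQW he_neg.le
    have h3 : (s/2 * W) ^ e = 2 ^ (-e) * (s ^ e * W ^ e) := by
      rw [Real.mul_rpow (by positivity) hWpos.le, Real.div_rpow hs.le (by norm_num),
        Real.rpow_neg (by norm_num : (0:ℝ) ≤ 2)]
      field_simp
    rw [← h3]; exact h2
  -- assemble
  rw [hderiv, hwnorm, hwpow, abs_mul, abs_neg, abs_mul,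
    abs_of_pos hc0pos, abs_of_pos hc1pos]
  have hWe : (0:ℝ) ≤ W ^ e := Real.rpow_nonneg hWpos.le _
  have hstep1 : c0 * c1 * |g'| ≤ c0 * c1 * ((|θ| + |e|) * (s^(θ-1) * Q s ^ e)) := by
    apply mul_le_mul_of_nonneg_left hg'bound (by positivity)
  refine le_trans hstep1 ?_
  have hstep2 : s^(θ-1) * Q s ^ e ≤ s^(θ-1) * (2 ^ (-e) * (s ^ e * W ^ e)) :=
    mul_le_mul_of_nonneg_left hQe_bound (Real.rpow_nonneg hs.le _)
  have hfinal : s^(θ-1) * (2 ^ (-e) * (s ^ e * W ^ e))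
      = 2 ^ (-e) * (s ^ (-(d:ℝ)/2 + θ) * W ^ e) := by
    have : s ^ (-(d:ℝ)/2 + θ) = s^(θ-1) * s ^ e := by
      rw [← Real.rpow_add hs]
      congr 1; rw [he]; ring
    rw [this]; ring
  calc c0 * c1 * ((|θ| + |e|) * (s^(θ-1) * Q s ^ e))
      ≤ c0 * c1 * ((|θ| + |e|) * (s^(θ-1) * (2 ^ (-e) * (s ^ e * W ^ e)))) := by
        apply mul_le_mul_of_nonneg_left _ (by positivity)
        exact mul_le_mul_of_nonneg_left hstep2 (by positivity)
    _ = c0 * c1 * (|θ| + |e|) * 2 ^ (-e) * s ^ (-(d:ℝ)/2 + θ) * W ^ e := by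
        rw [hfinal]; ring
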